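/- Let A be a finite set of exponents in ℤ^d, v ∈ A, and a : A → ℂ with a_m ≠ 0 for all m ∈ A. Let β > 0 satisfy (|A| − 1)·e^{−β} ≤ 1/2, where |A| is the cardinality of A. Suppose z ∈ (ℂ \ {0})^d satisfies ∑_{m ∈ A} a_m z^m = 1, and the point x ∈ ℝ^d with x_i = log|z_i| satisfies ⟨m, x⟩ + log|a_m| ≤ ⟨v, x⟩ + log|a_v| − β for every m ∈ A with m ≠ v. Then |⟨v, x⟩ + log|a_v|| ≤ 2(|A| − 1)·e^{−β} and |arg(a_v z^v)| ≤ 2(|A| − 1)·e^{−β}. (This is the paper's Lemma on points of Z_a lying over the chart U_v^β: both |⟨v, log|z|⟩ + λ(v)| and |⟨v, Arg(z)⟩ + θ_v| are bounded by C(β)e^{−β}.) -/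

import Mathlib

/-- Paper's Lemma on points of `Z_a` lying over the chart `U_v^β`: if `z` solves
`∑_{m∈A} a_m z^m = 1` and the monomial `a_v z^v` dominates all others by a factor
`e^{−β}` at `x = log|z|`, then both `|⟨v, log|z|⟩ + λ(v)|` and `|arg(a_v z^v)|`
are bounded by `2(|A|−1)e^{−β}`. -/
theorem stmt_2 (d : ℕ) (A : Finset (Fin d → ℤ)) (v : Fin d → ℤ) (hv : v ∈ A)
    (a : (Fin d → ℤ) → ℂ) (ha : ∀ m ∈ A, a m ≠ 0)
    (β : ℝ) (hβ : 0 < β)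
    (hcard : ((A.card : ℝ) - 1) * Real.exp (-β) ≤ 1 / 2)
    (z : Fin d → ℂ) (hz : ∀ i, z i ≠ 0)
    (hsum : ∑ m ∈ A, a m * ∏ i, z i ^ m i = 1)
    (x : Fin d → ℝ) (hx : ∀ i, x i = Real.log (‖z i‖))
    (hsep : ∀ m ∈ A, m ≠ v →
      (∑ i, (m i : ℝ) * x i) + Real.log (‖a m‖)
        ≤ (∑ i, (v i : ℝ) * x i) + Real.log (‖a v‖) - β) :
    |(∑ i, (v i : ℝ) * x i) + Real.log (‖a v‖)|
        ≤ 2 * ((A.card : ℝ) - 1) * Real.exp (-β) ∧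
      |Complex.arg (a v * ∏ i, z i ^ v i)|
        ≤ 2 * ((A.card : ℝ) - 1) * Real.exp (-β) := by
  set w : (Fin d → ℤ) → ℂ := fun m => a m * ∏ i, z i ^ m i with hw
  set ε : ℝ := ((A.card : ℝ) - 1) * Real.exp (-β) with hε
  have hcard1 : (1 : ℝ) ≤ (A.card : ℝ) := by
    exact_mod_cast Finset.card_pos.mpr ⟨v, hv⟩
  have hε0 : 0 ≤ ε := mul_nonneg (by linarith) (Real.exp_pos _).le
  have hεhalf : ε ≤ 1 / 2 := hcard
  -- modulus formula
  have habs : ∀ m ∈ A, ‖w m‖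
      = Real.exp ((∑ i, (m i : ℝ) * x i) + Real.log (‖a m‖)) := by
    intro m hm
    have h2 : Real.exp (∑ i, (m i : ℝ) * x i) = ∏ i, ‖z i‖ ^ m i := by
      rw [Real.exp_sum]
      refine Finset.prod_congr rfl fun i _ => ?_
      have hzi : 0 < ‖z i‖ := norm_pos_iff.mpr (hz i)
      rw [hx i, mul_comm, ← Real.rpow_def_of_pos hzi, Real.rpow_intCast]
    rw [Real.exp_add, h2, Real.exp_log (norm_pos_iff.mpr (ha m hm))]
    simp [hw, map_prod, map_zpow₀, mul_comm]
  set L : ℝ := (∑ i, (v i : ℝ) * x i) + Real.log (‖a v‖) with hL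
  set E : ℝ := Real.exp L with hE
  have hEv : ‖w v‖ = E := habs v hv
  have hEpos : 0 < E := Real.exp_pos _
  -- key inequality |1 - w v| ≤ ε * E
  have hsplit : (1 : ℂ) - w v = ∑ m ∈ A.erase v, w m := by
    rw [← hsum, ← Finset.sum_erase_add A w hv]; ring
  have hkey : ‖1 - w v‖ ≤ ε * E := by
    rw [hsplit]
    calc ‖∑ m ∈ A.erase v, w m‖
        ≤ ∑ m ∈ A.erase v, ‖w m‖ := by
          exact norm_sum_le _ _
      _ ≤ ∑ _m ∈ A.erase v, Real.exp (-β) * E := by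
          refine Finset.sum_le_sum fun m hm => ?_
          have hmA := Finset.mem_of_mem_erase hm
          have hmv := Finset.ne_of_mem_erase hm
          rw [habs m hmA]
          calc Real.exp ((∑ i, (m i : ℝ) * x i) + Real.log (‖a m‖))
              ≤ Real.exp (L - β) := Real.exp_le_exp.mpr (hsep m hmA hmv)
            _ = Real.exp (-β) * E := by rw [hE, ← Real.exp_add]; ring_nf
      _ = ε * E := by
          rw [Finset.sum_const, nsmul_eq_mul, Finset.card_erase_of_mem hv]
          have : ((A.card - 1 : ℕ) : ℝ) = (A.card : ℝ) - 1 := by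
            have : 1 ≤ A.card := Finset.card_pos.mpr ⟨v, hv⟩
            push_cast [this]; ring
          rw [this, hε]; ring
  have habsE : |1 - E| ≤ ε * E := by
    calc |1 - E| = |‖(1:ℂ)‖ - ‖w v‖| := by
          rw [hEv]; norm_num
      _ ≤ ‖1 - w v‖ := abs_norm_sub_norm_le _ _
      _ ≤ ε * E := hkey
  have hEub : E * (1 - ε) ≤ 1 := by
    have := abs_le.mp habsE
    nlinarith [this.1, this.2]
  have hElb : 1 ≤ E * (1 + ε) := by
    have := abs_le.mp habsE
    nlinarith [this.1, this.2]
  have hεE : ε * E ≤ 1 := by nlinarith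
  -- first bound
  have hexp2ε : 1 + 2 * ε ≤ Real.exp (2 * ε) := by
    have := Real.add_one_le_exp (2 * ε); linarith
  have hL2 : |L| ≤ 2 * ε := by
    rw [abs_le]
    constructor
    · rw [← Real.exp_le_exp, ← hE]
      have h1 : Real.exp (-(2 * ε)) * Real.exp (2 * ε) = 1 := by
        rw [← Real.exp_add]; simp
      nlinarith [Real.exp_pos (-(2 * ε))]
    · rw [← Real.exp_le_exp, ← hE]
      nlinarith
  refine ⟨by rw [hε] at hL2; linarith [hL2], ?_⟩
  -- argument bound
  have hwv : w v ≠ 0 := by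
    intro h
    rw [h, norm_zero] at hEv; exact hEpos.ne' hEv.symm
  have hIm : |(w v).im| ≤ ε * E := by
    have : (w v).im = -(1 - w v).im := by simp
    rw [this, abs_neg]
    exact le_trans (Complex.abs_im_le_norm _) hkey
  have hRe : 0 ≤ (w v).re := by
    have h1 : |(1 - w v).re| ≤ ε * E := le_trans (Complex.abs_re_le_norm _) hkey
    have h2 : (1 - w v).re = 1 - (w v).re := by simp
    rw [h2] at h1
    have := abs_le.mp h1
    linarith [this.2]
  have harg2 : |Complex.arg (w v)| ≤ Real.pi / 2 :=
    Complex.abs_arg_le_pi_div_two_iff.mpr hRe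
  have hsin : Real.sin |Complex.arg (w v)| ≤ ε := by
    have hs : Real.sin (Complex.arg (w v)) = (w v).im / ‖w v‖ :=
      Complex.sin_arg _
    have hb : |Real.sin (Complex.arg (w v))| ≤ ε := by
      rw [hs, hEv, abs_div, abs_of_pos hEpos, div_le_iff₀ hEpos]
      linarith [hIm]
    rcases abs_cases (Complex.arg (w v)) with ⟨h, _⟩ | ⟨h, _⟩
    · rw [h]; exact le_trans (le_abs_self _) hb
    · rw [h, Real.sin_neg]; exact le_trans (neg_le_abs _) hb
  have hjordan : 2 / Real.pi * |Complex.arg (w v)| ≤ Real.sin |Complex.arg (w v)| :=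
    Real.mul_le_sin (abs_nonneg _) harg2
  have hπ : Real.pi ≤ 4 := by linarith [Real.pi_le_four]
  have hπ0 : 0 < Real.pi := Real.pi_pos
  have : |Complex.arg (w v)| ≤ Real.pi / 2 * ε := by
    have h := le_trans hjordan hsin
    rw [div_mul_eq_mul_div, div_le_iff₀ hπ0] at h
    nlinarith
  calc |Complex.arg (a v * ∏ i, z i ^ v i)| = |Complex.arg (w v)| := rfl
    _ ≤ Real.pi / 2 * ε := this
    _ ≤ 2 * ((A.card : ℝ) - 1) * Real.exp (-β) := by rw [hε] at *; nlinarith
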